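/- Let p ≥ 2 be an even integer. For real numbers x, y, both real orbits {Q_{p,x-y}^n(0)} and {Q_{p,x+y}^n(0)} are bounded if and only if |x - t_p| + |y| ≤ l_p/2, where t_p = (-p[(2p)^{1/(p-1)} - 1] - 1)/(2 p^{p/(p-1)}) and l_p = (p[(2p)^{1/(p-1)} + 1] - 1)/p^{p/(p-1)}. -/

import Mathlib

set_option maxHeartbeats 1000000

open Real

private lemma bdd_iff (p : ℕ) (hp : 2 ≤ p) (hpe : Even p) (c : ℝ) :
    (∃ M : ℝ, ∀ n : ℕ, 1 ≤ n → |(fun z : ℝ => z ^ p + c)^[n] 0| ≤ M) ↔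
    (-(2:ℝ) ^ ((1:ℝ)/((p:ℝ)-1)) ≤ c ∧
      c ≤ ((p:ℝ)-1)/(p:ℝ) ^ ((p:ℝ)/((p:ℝ)-1))) := by
  have hq2 : (2:ℝ) ≤ (p:ℝ) := by exact_mod_cast hp
  set q : ℝ := (p:ℝ) with hqdef
  have hq0 : (0:ℝ) < q := by linarith
  have hq1 : (1:ℝ) < q := by linarith
  have hq1' : (0:ℝ) < q - 1 := by linarith
  set e : ℝ := 1/(q-1) with hedef
  have he0 : 0 < e := by positivity
  have he1 : e * (q - 1) = 1 := by rw [hedef]; field_simp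
  set E : ℝ := q/(q-1) with hEdef
  have hEe : E = e * q := by rw [hEdef, hedef]; ring
  have hE1e : E = 1 + e := by
    rw [hEdef, hedef]; field_simp; ring
  set B : ℝ := (q-1)/q ^ E with hBdef
  have hqE0 : (0:ℝ) < q ^ E := rpow_pos_of_pos hq0 E
  have hB0 : 0 < B := by rw [hBdef]; positivity
  -- the cast of p - 1
  have hpm1 : ((p - 1 : ℕ) : ℝ) = q - 1 := by
    rw [hqdef]; push_cast [Nat.cast_sub (by omega : 1 ≤ p)]; ring
  -- (2^e)^(p-1) = 2
  have hA2 : ((2:ℝ) ^ e) ^ (p - 1) = 2 := by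
    rw [← Real.rpow_natCast ((2:ℝ) ^ e) (p - 1), ← Real.rpow_mul (by norm_num : (0:ℝ) ≤ 2),
      hpm1, he1, Real.rpow_one]
  -- β = q^(-e), the invariant endpoint
  set β : ℝ := q ^ (-e) with hβdef
  have hβ0 : 0 < β := rpow_pos_of_pos hq0 _
  have hβp : β ^ p = q ^ (-(e * q)) := by
    rw [hβdef, ← Real.rpow_natCast (q ^ (-e)) p, ← Real.rpow_mul hq0.le, ← hqdef]
    congr 1; ring
  have h1e : q ^ (1 + -(e * q)) = q ^ (-e) := by
    congr 1; linear_combination -he1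
  have hmul : q * q ^ (-(e * q)) = β := by
    rw [hβdef, ← h1e, Real.rpow_add hq0, Real.rpow_one]
  have hfix : β - β ^ p = B := by
    have hBe : B = (q - 1) * q ^ (-(e * q)) := by
      rw [hBdef, hEe, div_eq_mul_inv, ← Real.rpow_neg hq0.le]
    rw [hβp, hBe, ← hmul]; ring
  -- Young : ∀ z, z - z^p ≤ B
  have hYoung : ∀ z : ℝ, z - z ^ p ≤ B := by
    intro z
    rcases le_or_gt z 0 with hz | hz
    · have h0 : 0 ≤ z ^ p := hpe.pow_nonneg z
      linarith
    · have hconj : Real.HolderConjugate q E := by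
        refine Real.holderConjugate_iff.mpr ⟨hq1, ?_⟩
        rw [hEdef]; field_simp; ring
      have hy := Real.young_inequality_of_nonneg hz.le
        (by positivity : (0:ℝ) ≤ q⁻¹) hconj
      have hzq : z ^ (q:ℝ) = z ^ p := by
        rw [hqdef, Real.rpow_natCast]
      have hiq : (q⁻¹ : ℝ) ^ E = (q ^ E)⁻¹ := Real.inv_rpow hq0.le E
      rw [hzq, hiq] at hy
      -- hy : z * q⁻¹ ≤ z ^ p / q + (q ^ E)⁻¹ / E
      have hBeq : q * ((q ^ E)⁻¹ / E) = B := by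
        rw [hBdef, hEdef]
        field_simp
      have := mul_le_mul_of_nonneg_right hy hq0.le
      have hz1 : z * q⁻¹ * q = z := by field_simp
      have hz2 : (z ^ p / q + (q ^ E)⁻¹ / E) * q = z ^ p + q * ((q ^ E)⁻¹ / E) := by
        field_simp
      rw [hz1, hz2, hBeq] at this
      linarith
  set f : ℝ → ℝ := fun z : ℝ => z ^ p + c with hfdef
  have hf1 : f^[1] 0 = c := by
    simp [hfdef, zero_pow (by omega : p ≠ 0)]
  constructor
  · rintro ⟨M, hM⟩
    constructor
    · -- lower bound: otherwise escape
      by_contra hcon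
      push_neg at hcon
      set r : ℝ := -c with hrdef
      have hr2 : (2:ℝ) ^ e < r := by rw [hrdef]; linarith
      have hr0 : 0 < r := lt_trans (rpow_pos_of_pos two_pos e) hr2
      have hrp : (2:ℝ) < r ^ (p - 1) := by
        calc (2:ℝ) = ((2:ℝ) ^ e) ^ (p-1) := hA2.symm
        _ < r ^ (p-1) := by
            exact pow_lt_pow_left₀ hr2 (rpow_pos_of_pos two_pos e).le (by omega)
      set lam : ℝ := r ^ (p - 1) - 1 with hlamdef
      have hlam1 : 1 < lam := by rw [hlamdef]; linarith
      have key : ∀ n : ℕ, 1 ≤ n → r * lam ^ (n - 1) ≤ |f^[n] 0| := by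
        intro n hn
        induction n with
        | zero => omega
        | succ m ih =>
          rcases Nat.eq_or_lt_of_le hn with h1 | h1
          · rw [← h1]
            have habs1 : |f^[1] 0| = r := by
              rw [hf1, abs_of_nonpos (by linarith : c ≤ 0), hrdef]
            rw [habs1]
            simp
          · have hm1 : 1 ≤ m := by omega
            have ihm := ih hm1
            have hzm : r ≤ |f^[m] 0| := by
              have : r * 1 ≤ r * lam ^ (m - 1) := by
                apply mul_le_mul_of_nonneg_left _ hr0.le
                exact one_le_pow₀ hlam1.le
              linarith
            set z := f^[m] 0 with hzdef
            have hzp : z ^ p = |z| ^ p := (hpe.pow_abs z).symm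
            have hpow : |z| ^ p = |z| ^ (p - 1) * |z| := by
              rw [← pow_succ]; congr 1; omega
            have hpow2 : r ^ (p - 1) * |z| ≤ |z| ^ (p - 1) * |z| := by
              apply mul_le_mul_of_nonneg_right _ (abs_nonneg z)
              exact pow_le_pow_left₀ hr0.le hzm _
            have hstep : lam * |z| ≤ f z := by
              have : f z = |z| ^ p - r := by
                simp only [hfdef]
                rw [hzp, hrdef]; ring
              rw [this, hpow]
              have : lam * |z| = r ^ (p-1) * |z| - |z| := by rw [hlamdef]; ring
              rw [this]
              have : r ≤ |z| := hzm
              nlinarith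
            have hiter : f^[m+1] 0 = f z := by
              rw [Function.iterate_succ_apply', hzdef]
            have hlamz : r * lam ^ m ≤ lam * |z| := by
              calc r * lam ^ m = lam * (r * lam ^ (m-1)) := by
                    have hmeq : m = (m - 1) + 1 := by omega
                    conv_lhs => rw [hmeq]
                    rw [pow_succ]; ring
              _ ≤ lam * |z| := by
                    apply mul_le_mul_of_nonneg_left ihm (by linarith)
            have : r * lam ^ m ≤ f z := le_trans hlamz hstep
            rw [hiter]
            simp only [Nat.add_sub_cancel]
            calc r * lam ^ m ≤ f z := this
            _ ≤ |f z| := le_abs_self _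
      obtain ⟨k, hk⟩ := pow_unbounded_of_one_lt (M / r) hlam1
      have h1 := key (k + 1) (by omega)
      have h2 := hM (k + 1) (by omega)
      simp only [Nat.add_sub_cancel] at h1
      have : M < r * lam ^ k := by
        rw [div_lt_iff₀ hr0] at hk
        linarith [hk]
      linarith
    · -- upper bound: otherwise escape (drift)
      by_contra hcon
      push_neg at hcon
      set d : ℝ := c - B with hddef
      have hd0 : 0 < d := by rw [hddef]; linarith
      have key : ∀ n : ℕ, 1 ≤ n → c + (n - 1 : ℕ) * d ≤ f^[n] 0 := by
        intro n hn
        induction n with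
        | zero => omega
        | succ m ih =>
          rcases Nat.eq_or_lt_of_le hn with h1 | h1
          · rw [← h1, hf1]; norm_num
          · have hm1 : 1 ≤ m := by omega
            have ihm := ih hm1
            set z := f^[m] 0 with hzdef
            have hstep : z + d ≤ f z := by
              have := hYoung z
              rw [hfdef]; simp only []
              rw [hddef]; linarith
            have hiter : f^[m+1] 0 = f z := by
              rw [Function.iterate_succ_apply', hzdef]
            rw [hiter]
            have hcast : ((m + 1 - 1 : ℕ) : ℝ) = ((m - 1 : ℕ) : ℝ) + 1 := by
              push_cast [Nat.cast_sub hm1]; ring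
            rw [hcast]
            have : c + ((m - 1 : ℕ) : ℝ) * d + d ≤ z + d := by linarith
            linarith
      obtain ⟨k, hk⟩ := exists_nat_gt ((M - c) / d)
      have h1 := key (k + 1) (by omega)
      have h2 := hM (k + 1) (by omega)
      simp only [Nat.add_sub_cancel] at h1
      have hk' : M - c < k * d := by
        rw [div_lt_iff₀ hd0] at hk
        linarith
      have : f^[k+1] 0 ≤ |f^[k+1] 0| := le_abs_self _
      linarith
  · rintro ⟨hlo, hhi⟩
    set m : ℝ := max (-c) β with hmdef
    have hm0 : 0 < m := lt_of_lt_of_le hβ0 (le_max_right _ _)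
    have hmc : -c ≤ m := le_max_left _ _
    have hcm : c ≤ m := by
      rcases le_or_gt c 0 with h | h
      · linarith
      · have : c ≤ β := by
          calc c ≤ B := hhi
          _ ≤ β := by
              have : 0 ≤ β ^ p := hpe.pow_nonneg β
              linarith [hfix]
        exact le_trans this (le_max_right _ _)
    have hdrop : m ^ p + c ≤ m := by
      rcases max_cases (-c) β with ⟨hm, hcase⟩ | ⟨hm, hcase⟩
      · -- m = -c, -c ≥ β
        rw [hmdef, hm]
        have hc0 : c ≤ 0 := by linarith [hβ0, hcase]
        have habs : (-c) ^ p = |c| ^ p := by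
          rw [← abs_neg, hpe.pow_abs]
        have h2e : |c| ^ (p - 1) ≤ 2 := by
          calc |c| ^ (p-1) ≤ ((2:ℝ)^e) ^ (p-1) := by
                apply pow_le_pow_left₀ (abs_nonneg c)
                rw [abs_of_nonpos hc0]; linarith
          _ = 2 := hA2
        have hsplit : |c| ^ p = |c| ^ (p-1) * |c| := by
          rw [← pow_succ]; congr 1; omega
        have : |c| ^ p ≤ 2 * |c| := by
          rw [hsplit]
          exact mul_le_mul_of_nonneg_right h2e (abs_nonneg c)
        rw [habs]
        rw [abs_of_nonpos hc0] at this
        linarith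
      · -- m = β
        rw [hmdef, hm]
        linarith [hfix, hhi]
    have inv : ∀ n : ℕ, 1 ≤ n → c ≤ f^[n] 0 ∧ f^[n] 0 ≤ m := by
      intro n hn
      induction n with
      | zero => omega
      | succ k ih =>
        rcases Nat.eq_or_lt_of_le hn with h1 | h1
        · rw [← h1, hf1]; exact ⟨le_refl c, hcm⟩
        · have hk1 : 1 ≤ k := by omega
          obtain ⟨ihl, ihr⟩ := ih hk1
          set z := f^[k] 0 with hzdef
          have hiter : f^[k+1] 0 = f z := by
            rw [Function.iterate_succ_apply', hzdef]
          rw [hiter, hfdef]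
          simp only []
          constructor
          · have : 0 ≤ z ^ p := hpe.pow_nonneg z
            linarith
          · have habs : |z| ≤ m := by
              rw [abs_le]; exact ⟨by linarith, ihr⟩
            have : z ^ p ≤ m ^ p := by
              rw [← hpe.pow_abs z]
              exact pow_le_pow_left₀ (abs_nonneg z) habs p
            linarith
    refine ⟨m, fun n hn => ?_⟩
    obtain ⟨h1, h2⟩ := inv n hn
    rw [abs_le]
    constructor
    · have : -m ≤ c := by
        have := le_max_left (-c) β
        rw [← hmdef] at this
        linarith
      linarith
    · exact h2

theorem stmt_11 (p : ℕ) (hp : 2 ≤ p) (hpe : Even p) (x y : ℝ) :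
    ((∃ M : ℝ, ∀ n : ℕ, 1 ≤ n → |(fun z : ℝ => z ^ p + (x - y))^[n] 0| ≤ M) ∧
     (∃ M : ℝ, ∀ n : ℕ, 1 ≤ n → |(fun z : ℝ => z ^ p + (x + y))^[n] 0| ≤ M)) ↔
      |x - (-(p : ℝ) * ((2 * (p : ℝ)) ^ ((1 : ℝ) / ((p : ℝ) - 1)) - 1) - 1) /
            (2 * (p : ℝ) ^ ((p : ℝ) / ((p : ℝ) - 1)))| + |y| ≤
        ((p : ℝ) * ((2 * (p : ℝ)) ^ ((1 : ℝ) / ((p : ℝ) - 1)) + 1) - 1) /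
            (p : ℝ) ^ ((p : ℝ) / ((p : ℝ) - 1)) / 2 := by
  have hq2 : (2:ℝ) ≤ (p:ℝ) := by exact_mod_cast hp
  set q : ℝ := (p:ℝ) with hqdef
  have hq0 : (0:ℝ) < q := by linarith
  have hq1' : (0:ℝ) < q - 1 := by linarith
  set e : ℝ := 1/(q-1) with hedef
  set E : ℝ := q/(q-1) with hEdef
  set A : ℝ := -(2:ℝ) ^ e with hAdef
  set B : ℝ := (q-1)/q ^ E with hBdef
  have hqE0 : (0:ℝ) < q ^ E := rpow_pos_of_pos hq0 E
  have hqe0 : (0:ℝ) < q ^ e := rpow_pos_of_pos hq0 e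
  have h2e0 : (0:ℝ) < (2:ℝ) ^ e := rpow_pos_of_pos two_pos e
  have hqEe : q ^ E = q * q ^ e := by
    have hE1e : E = 1 + e := by
      rw [hEdef, hedef]; field_simp; ring
    rw [hE1e, Real.rpow_add hq0, Real.rpow_one]
  have h2q : (2 * q) ^ e = 2 ^ e * q ^ e := Real.mul_rpow (by norm_num) hq0.le
  have ht : (-q * ((2*q) ^ e - 1) - 1) / (2 * q ^ E) = (A + B) / 2 := by
    rw [h2q, hqEe, hAdef, hBdef, hqEe]
    field_simp
    ring
  have hL : (q * ((2*q) ^ e + 1) - 1) / q ^ E / 2 = (B - A) / 2 := by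
    rw [h2q, hqEe, hAdef, hBdef, hqEe]
    field_simp
    ring
  rw [bdd_iff p hp hpe (x - y), bdd_iff p hp hpe (x + y)]
  rw [← hqdef, ← hedef, ← hEdef, ← hAdef, ← hBdef, ht, hL]
  constructor
  · rintro ⟨⟨h1, h2⟩, ⟨h3, h4⟩⟩
    rcases abs_cases (x - (A + B) / 2) with ⟨e1, _⟩ | ⟨e1, _⟩ <;>
      rcases abs_cases y with ⟨e2, _⟩ | ⟨e2, _⟩ <;> linarith
  · intro h
    rcases abs_cases (x - (A + B) / 2) with ⟨e1, _⟩ | ⟨e1, _⟩ <;>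
      rcases abs_cases y with ⟨e2, _⟩ | ⟨e2, _⟩ <;>
      refine ⟨⟨by linarith, by linarith⟩, by linarith, by linarith⟩
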